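/- Let K be a number field with s real embeddings and 2t complex embeddings, with s ≥ 1. Then the unit group O_K^* of the ring of integers is isomorphic to the product of the group {±1} and a free abelian group of rank s + t - 1. -/
import Mathlib


open NumberField

section Aux

variable (K : Type*) [Field K] [NumberField K]

open NumberField.Units NumberField.InfinitePlace

/-- If `K` has a real place, every torsion unit is `1` or `-1`. -/
theorem torsion_eq_pm_one {w : InfinitePlace K} (hw : w.IsReal)
    {x : (𝓞 K)ˣ} (hx : x ∈ torsion K) : x = 1 ∨ x = -1 := by
  obtain ⟨n, hn, hxn⟩ := (isOfFinOrder_iff_pow_eq_one).mp hx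
  set φ := embedding_of_isReal hw with hφ
  have hKn : (x : K) ^ n = 1 := by
    have := congrArg (fun u : (𝓞 K)ˣ => (u : K)) hxn
    simpa using this
  have hφn : (φ (x : K)) ^ n = 1 := by rw [← map_pow, hKn, map_one]
  have hsq : (φ (x : K)) ^ 2 = 1 := by
    rcases (pow_eq_one_iff_cases.mp hφn) with h | h | h
    · omega
    · rw [h]; norm_num
    · rw [h.1]; norm_num
  have hKsq : (x : K) ^ 2 = 1 := by
    apply φ.injective
    rw [map_pow, hsq, map_one]
  rcases sq_eq_one_iff.mp hKsq with h | h
  · left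
    apply Units.coe_injective K
    simpa using h
  · right
    apply Units.coe_injective K
    simpa using h

/-- The monoid hom from `ℤˣ` into the unit group. -/
noncomputable def pmOneHom : ℤˣ →* (𝓞 K)ˣ :=
  Units.map (Int.castRingHom (𝓞 K)).toMonoidHom

theorem pmOneHom_mem_torsion (u : ℤˣ) : pmOneHom K u ∈ Units.torsion K := by
  rcases Int.units_eq_one_or u with h | h <;> subst h
  · rw [map_one]; exact (Units.torsion K).one_mem
  · refine isOfFinOrder_iff_pow_eq_one.mpr ⟨2, by norm_num, ?_⟩
    ext
    simp [pmOneHom]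

/-- If `K` has a real place, the torsion of the unit group is `{±1} ≃ ℤˣ`. -/
noncomputable def torsionEquiv {w : InfinitePlace K} (hw : w.IsReal) :
    ℤˣ ≃* Units.torsion K := by
  refine MulEquiv.ofBijective
    ((pmOneHom K).codRestrict (Units.torsion K) (pmOneHom_mem_torsion K)) ⟨?_, ?_⟩
  · intro u v huv
    have h : pmOneHom K u = pmOneHom K v := congrArg Subtype.val huv
    have hval : ((u : ℤ) : 𝓞 K) = ((v : ℤ) : 𝓞 K) := by
      have := congrArg (fun y : (𝓞 K)ˣ => (y : 𝓞 K)) h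
      simpa [pmOneHom] using this
    rcases Int.units_eq_one_or u with h1 | h1 <;> rcases Int.units_eq_one_or v with h2 | h2 <;>
        subst h1 <;> subst h2 <;> try rfl
    · norm_num at hval
    · norm_num at hval
  · rintro ⟨x, hx⟩
    rcases torsion_eq_pm_one K hw hx with h | h
    · exact ⟨1, by ext; simp [pmOneHom, h]⟩
    · refine ⟨-1, ?_⟩
      ext
      simp [pmOneHom, h]

/-- The structure hom from torsion × exponents to units. -/
noncomputable def unitsStructureHom :
    (Units.torsion K) × Multiplicative (Fin (Units.rank K) → ℤ) →* (𝓞 K)ˣ where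
  toFun p := (p.1 : (𝓞 K)ˣ) * ∏ i, fundSystem K i ^ (Multiplicative.toAdd p.2 i)
  map_one' := by simp
  map_mul' p q := by
    simp only [Prod.fst_mul, Prod.snd_mul, Subgroup.coe_mul, toAdd_mul, Pi.add_apply,
      zpow_add, Finset.prod_mul_distrib]
    exact mul_mul_mul_comm _ _ _ _

theorem unitsStructureHom_bijective : Function.Bijective (unitsStructureHom K) := by
  constructor
  · rintro ⟨ζ, e⟩ ⟨ζ', e'⟩ h
    obtain ⟨p, -, hp⟩ := exist_unique_eq_mul_prod K (unitsStructureHom K (ζ, e))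
    have h1 : (ζ, Multiplicative.toAdd e) = p := hp _ rfl
    have h2 : (ζ', Multiplicative.toAdd e') = p := hp _ h
    have h3 := h1.trans h2.symm
    rw [Prod.ext_iff] at h3
    exact Prod.ext h3.1 (by simpa using congrArg Multiplicative.ofAdd h3.2)
  · intro x
    obtain ⟨⟨ζ, e⟩, hp, -⟩ := exist_unique_eq_mul_prod K x
    exact ⟨(ζ, Multiplicative.ofAdd e), hp.symm⟩

end Aux

/-- Dirichlet's unit theorem: for a number field `K` with `s ≥ 1` real places and
`t` complex places, the unit group of the ring of integers is isomorphic to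
`{±1} × ℤ^(s+t-1)`. -/
theorem unit_group_structure (K : Type*) [Field K] [NumberField K]
    (s t : ℕ) (hs : s = InfinitePlace.nrRealPlaces K)
    (ht : t = InfinitePlace.nrComplexPlaces K) (hs1 : 1 ≤ s) :
    Nonempty ((𝓞 K)ˣ ≃* ℤˣ × Multiplicative (Fin (s + t - 1) → ℤ)) := by
  have hrank : s + t - 1 = Units.rank K := by
    rw [Units.rank, InfinitePlace.card_eq_nrRealPlaces_add_nrComplexPlaces, hs, ht]
  rw [hrank]
  -- a real place exists
  have h0 : InfinitePlace.nrRealPlaces K ≠ 0 := by omega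
  have hne : Nonempty {w : InfinitePlace K // w.IsReal} := by
    by_contra hne
    rw [not_nonempty_iff] at hne
    exact h0 (by simpa using Fintype.card_eq_zero_iff.mpr hne)
  obtain ⟨w, hw⟩ := hne
  have e1 : (𝓞 K)ˣ ≃* (Units.torsion K) × Multiplicative (Fin (Units.rank K) → ℤ) :=
    (MulEquiv.ofBijective (unitsStructureHom K) (unitsStructureHom_bijective K)).symm
  exact ⟨e1.trans (MulEquiv.prodCongr (torsionEquiv K hw).symm (MulEquiv.refl _))⟩
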